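/- Let β = 2 and let y = m(y)·2^{e(y)} ∈ D with 2^{t-1} ≤ |m(y)| < 2^t and e(y) > E_min. For any real w̃ ∈ [y − 2^{e(y)-1}, y + 2^{e(y)-1}], the difference y − fl(w̃) can only take the values 0, ±2^{e(y)-1}, or ±2^{e(y)}; in particular y − fl(w̃) ∈ D. -/
import Mathlib

/-- Dekker's floating point number system as a set of reals. -/
def Dekker (β : ℤ) (t : ℕ) (Emin Emax : ℤ) : Set ℝ :=
  {x | ∃ m e : ℤ, |m| < β ^ t ∧ Emin ≤ e ∧ e ≤ Emax ∧ x = (m : ℝ) * (β : ℝ) ^ e}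

lemma dekker_neg {β : ℤ} {t : ℕ} {Emin Emax : ℤ} {x : ℝ}
    (hx : x ∈ Dekker β t Emin Emax) : -x ∈ Dekker β t Emin Emax := by
  obtain ⟨m, e, h1, h2, h3, h4⟩ := hx
  exact ⟨-m, e, by simpa using h1, h2, h3, by push_cast [h4]; ring⟩

lemma dekker_key (t : ℕ) (Emin Emax : ℤ) (ht : 1 ≤ t)
    (fl : ℝ → ℝ)
    (hmem : ∀ x, fl x ∈ Dekker 2 t Emin Emax)
    (hnear : ∀ x, ∀ a ∈ Dekker 2 t Emin Emax, |fl x - x| ≤ |a - x|)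
    (my ey : ℤ) (hmy1 : (2:ℤ) ^ (t - 1) ≤ my) (hmy2 : my < 2 ^ t)
    (hey1 : Emin < ey) (hey2 : ey ≤ Emax)
    (wt : ℝ) (hw1 : (my : ℝ) * (2:ℝ) ^ ey - (2 : ℝ) ^ (ey - 1) ≤ wt)
    (hw2 : wt ≤ (my : ℝ) * (2:ℝ) ^ ey + (2 : ℝ) ^ (ey - 1)) :
    ∃ k : ℤ, |2 * my - k| ≤ 2 ∧ fl wt = (k : ℝ) * (2:ℝ) ^ (ey - 1) := by
  set P : ℝ := (2:ℝ) ^ (ey - 1) with hPdef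
  have hP : (0:ℝ) < P := by positivity
  have hsplit : (2:ℝ) ^ ey = 2 * P := by
    rw [hPdef, show ey = ey - 1 + 1 by ring,
      zpow_add_one₀ (by norm_num : (2:ℝ) ≠ 0)]
    ring_nf
  have hmypos : (0:ℤ) < my := lt_of_lt_of_le (by positivity) hmy1
  have h2my : (2:ℤ) ^ t ≤ 2 * my := by
    calc (2:ℤ) ^ t = 2 * 2 ^ (t - 1) := by
          rw [← pow_succ']; congr 1; omega
      _ ≤ 2 * my := by linarith
  have h2t : (2:ℝ) ^ t ≤ 2 * (my:ℝ) := by exact_mod_cast h2my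
  have h2t2 : (2:ℝ) ≤ (2:ℝ) ^ t := by
    calc (2:ℝ) = 2 ^ 1 := by norm_num
      _ ≤ 2 ^ t := by apply pow_le_pow_right₀ (by norm_num) ht
  have h1t : (1:ℤ) < 2 ^ t := by
    calc (1:ℤ) < 2 ^ 1 := by norm_num
      _ ≤ 2 ^ t := pow_le_pow_right₀ (by norm_num) ht
  -- y in D
  have hyD : (my : ℝ) * (2:ℝ) ^ ey ∈ Dekker 2 t Emin Emax :=
    ⟨my, ey, by rwa [abs_of_pos hmypos], le_of_lt hey1, hey2, by push_cast; ring⟩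
  have hPD : P ∈ Dekker 2 t Emin Emax :=
    ⟨1, ey - 1, by simpa using h1t, by omega, by omega, by push_cast; ring⟩
  -- basic bound : |fl wt - wt| ≤ P
  have hby : |fl wt - wt| ≤ P := by
    have := hnear wt _ hyD
    have h2 : |(my:ℝ) * 2 ^ ey - wt| ≤ P := by
      rw [abs_le]; constructor <;> linarith
    linarith [this, h2]
  -- wt lower bound : (2^t - 1) * P ≤ wt
  have hwlb : ((2:ℝ) ^ t - 1) * P ≤ wt := by
    nlinarith [hw1, hsplit, h2t, hP]
  -- step 1: fl wt is a multiple of P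
  have hmul : ∃ k : ℤ, fl wt = (k : ℝ) * P := by
    by_contra hcon
    push_neg at hcon
    obtain ⟨m, e, hm, he1, he2, hfe⟩ := hmem wt
    have he : e ≤ ey - 2 := by
      by_contra hee
      push_neg at hee
      have hee' : ey - 1 ≤ e := by omega
      refine hcon (m * 2 ^ (e - (ey - 1)).toNat) ?_
      rw [hfe, hPdef]
      push_cast
      rw [mul_assoc, ← zpow_natCast (2:ℝ), ← zpow_add₀ (by norm_num : (2:ℝ) ≠ 0)]
      congr 2
      omega
    -- upper bound |fl wt| ≤ (2^t - 1) * P / 2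
    have hub : |fl wt| ≤ ((2:ℝ) ^ t - 1) * (P / 2) := by
      have hmr : |(m:ℝ)| ≤ (2:ℝ) ^ t - 1 := by
        have : |m| ≤ 2 ^ t - 1 := by omega
        exact_mod_cast this
      have hpe : (2:ℝ) ^ e ≤ P / 2 := by
        rw [hPdef, show (ey - 1 : ℤ) = (ey - 2) + 1 by ring,
          zpow_add_one₀ (by norm_num : (2:ℝ) ≠ 0)]
        have : (2:ℝ) ^ e ≤ (2:ℝ) ^ (ey - 2) :=
          zpow_le_zpow_right₀ (by norm_num) he
        linarith
      calc |fl wt| = |(m:ℝ)| * (2:ℝ) ^ e := by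
            rw [hfe]; push_cast; rw [abs_mul, abs_of_pos (by positivity : (0:ℝ) < (2:ℝ)^e)]
        _ ≤ ((2:ℝ) ^ t - 1) * (P / 2) := by
            apply mul_le_mul hmr hpe (by positivity) (by linarith)
    -- lower bound 1 : fl wt ≥ wt - P ≥ (2^t - 2) * P
    have hlb1 : ((2:ℝ) ^ t - 2) * P ≤ fl wt := by
      have := abs_le.mp hby
      nlinarith [hwlb]
    -- lower bound 2 : fl wt ≥ P
    have hlb2 : P ≤ fl wt := by
      have hnp := hnear wt _ hPD
      have hwP : P ≤ wt := by nlinarith [hwlb, h2t2, hP]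
      rw [abs_of_nonpos (by linarith : P - wt ≤ 0)] at hnp
      have h3 : wt - fl wt ≤ |fl wt - wt| := by rw [abs_sub_comm]; exact le_abs_self _
      linarith
    -- contradiction
    have hfub : fl wt ≤ ((2:ℝ) ^ t - 1) * (P / 2) := le_trans (le_abs_self _) hub
    rcases Nat.lt_or_ge t 2 with h | h
    · -- t = 1
      interval_cases t
      · norm_num at hfub; nlinarith [hlb2, hP]
    · have : (4:ℝ) ≤ (2:ℝ) ^ t := by
        calc (4:ℝ) = 2 ^ 2 := by norm_num
          _ ≤ 2 ^ t := pow_le_pow_right₀ (by norm_num) h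
      nlinarith [hlb1, hfub, hP]
  obtain ⟨k, hk⟩ := hmul
  refine ⟨k, ?_, hk⟩
  have hd : |((2 * my - k : ℤ) : ℝ)| * P ≤ 2 * P := by
    have h1 : |(my:ℝ) * 2 ^ ey - wt| ≤ P := by rw [abs_le]; constructor <;> linarith
    have h2 : ((2 * my - k : ℤ) : ℝ) * P = ((my:ℝ) * 2 ^ ey - wt) + (wt - fl wt) := by
      rw [hk]; push_cast; nlinarith [hsplit]
    calc |((2 * my - k : ℤ) : ℝ)| * P = |((2 * my - k : ℤ) : ℝ) * P| := by
          rw [abs_mul, abs_of_pos hP]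
      _ ≤ 2 * P := by
          rw [h2]
          calc |(my:ℝ) * 2 ^ ey - wt + (wt - fl wt)| ≤ |(my:ℝ) * 2 ^ ey - wt| + |wt - fl wt| :=
                abs_add_le _ _
            _ ≤ 2 * P := by
                have hby' : |wt - fl wt| ≤ P := by rw [abs_sub_comm]; exact hby
                linarith
  have : |((2 * my - k : ℤ) : ℝ)| ≤ 2 := by
    by_contra hcc
    push_neg at hcc
    nlinarith [hd, hP]
  exact_mod_cast this

/-- for normal y and w̃ within half an ulp-scale interval around y,
y − fl(w̃) takes only the values 0, ±2^{e(y)-1}, ±2^{e(y)}, and lies in D. -/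
theorem dekker_half_interval_difference
    (t : ℕ) (Emin Emax : ℤ) (ht : 1 ≤ t)
    (fl : ℝ → ℝ)
    (hmem : ∀ x, fl x ∈ Dekker 2 t Emin Emax)
    (hnear : ∀ x, ∀ a ∈ Dekker 2 t Emin Emax, |fl x - x| ≤ |a - x|)
    (my ey : ℤ) (hmy1 : 2 ^ (t - 1) ≤ |my|) (hmy2 : |my| < 2 ^ t)
    (hey1 : Emin < ey) (hey2 : ey ≤ Emax)
    (y : ℝ) (hy : y = (my : ℝ) * (2 : ℝ) ^ ey)
    (wt : ℝ) (hw1 : y - (2 : ℝ) ^ (ey - 1) ≤ wt) (hw2 : wt ≤ y + (2 : ℝ) ^ (ey - 1)) :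
    y - fl wt ∈
        ({0, (2 : ℝ) ^ (ey - 1), -(2 : ℝ) ^ (ey - 1), (2 : ℝ) ^ ey, -(2 : ℝ) ^ ey} : Set ℝ) ∧
      y - fl wt ∈ Dekker 2 t Emin Emax := by
  subst hy
  set P : ℝ := (2:ℝ) ^ (ey - 1) with hPdef
  have hP : (0:ℝ) < P := by positivity
  have hsplit : (2:ℝ) ^ ey = 2 * P := by
    rw [hPdef, show ey = ey - 1 + 1 by ring,
      zpow_add_one₀ (by norm_num : (2:ℝ) ≠ 0)]
    ring_nf
  have h1t : (1:ℤ) < 2 ^ t := by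
    calc (1:ℤ) < 2 ^ 1 := by norm_num
      _ ≤ 2 ^ t := pow_le_pow_right₀ (by norm_num) ht
  have hmyne : my ≠ 0 := by
    intro h
    rw [h] at hmy1
    simp at hmy1
    have : (0:ℤ) < 2 ^ (t - 1) := by positivity
    omega
  obtain ⟨j, hjabs, hj⟩ :
      ∃ j : ℤ, |j| ≤ 2 ∧ (my:ℝ) * (2:ℝ) ^ ey - fl wt = (j : ℝ) * P := by
    rcases lt_or_gt_of_ne hmyne with hneg | hpos
    · -- my < 0
      have hmy1' : (2:ℤ) ^ (t - 1) ≤ -my := by rwa [abs_of_neg hneg] at hmy1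
      have hmy2' : -my < 2 ^ t := by rwa [abs_of_neg hneg] at hmy2
      obtain ⟨k, hk1, hk2⟩ := dekker_key t Emin Emax ht (fun x => -fl (-x))
        (fun x => dekker_neg (hmem (-x)))
        (fun x a ha => by
          have h2 := hnear (-x) (-a) (dekker_neg ha)
          show |-fl (-x) - x| ≤ |a - x|
          calc |-fl (-x) - x| = |fl (-x) - -x| := by
                rw [show -fl (-x) - x = -(fl (-x) - -x) by ring, abs_neg]
            _ ≤ |-a - -x| := h2
            _ = |a - x| := by rw [show -a - -x = -(a - x) by ring, abs_neg])
        (-my) ey hmy1' hmy2' hey1 hey2 (-wt)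
        (by push_cast; linarith) (by push_cast; linarith)
      have hk2' : -fl wt = (k:ℝ) * P := by simpa using hk2
      refine ⟨2 * my + k, ?_, ?_⟩
      · rwa [show 2 * -my - k = -(2 * my + k) by ring, abs_neg] at hk1
      · push_cast
        linear_combination (my:ℝ) * hsplit + hk2'
    · -- my > 0
      have hmy1' : (2:ℤ) ^ (t - 1) ≤ my := by rwa [abs_of_pos hpos] at hmy1
      have hmy2' : my < 2 ^ t := by rwa [abs_of_pos hpos] at hmy2
      obtain ⟨k, hk1, hk2⟩ := dekker_key t Emin Emax ht fl hmem hnear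
        my ey hmy1' hmy2' hey1 hey2 wt hw1 hw2
      refine ⟨2 * my - k, hk1, ?_⟩
      push_cast
      linear_combination (my:ℝ) * hsplit - hk2
  obtain ⟨hj1, hj2⟩ := abs_le.mp hjabs
  constructor
  · rw [hj, hsplit]
    simp only [Set.mem_insert_iff, Set.mem_singleton_iff]
    interval_cases j
    · right; right; right; right; push_cast; ring
    · right; right; left; push_cast; ring
    · left; push_cast; ring
    · right; left; push_cast; ring
    · right; right; right; left; push_cast; ring
  · rw [hj]
    interval_cases j
    · exact ⟨-1, ey, by simpa using h1t, le_of_lt hey1, hey2,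
        by push_cast; rw [hsplit]; ring⟩
    · exact ⟨-1, ey - 1, by simpa using h1t, by omega, by omega, by push_cast; ring⟩
    · exact ⟨0, ey, by simpa using lt_trans zero_lt_one h1t, le_of_lt hey1, hey2,
        by push_cast; ring⟩
    · exact ⟨1, ey - 1, by simpa using h1t, by omega, by omega, by push_cast; ring⟩
    · exact ⟨1, ey, by simpa using h1t, le_of_lt hey1, hey2,
        by push_cast; rw [hsplit]; ring⟩
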